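/- Let ξ* be a complex balanced steady state of a polyexponential system with vector field φ and stoichiometric subspace S, and let D = diag(d_1,...,d_n) with d_i > 0. Define L(ξ) = Σ_{i=1}^n (1/d_i)(ξ_i - ξ*_i)^2. Then ⟨Dφ(ξ), ∇L(ξ)⟩ ≤ 0 for all ξ ∈ ℝ^n, with equality if and only if ξ - ξ* ∈ S^⊥. -/

import Mathlib

open scoped RealInnerProductSpace

lemma exp_key (u v : ℝ) : 0 ≤ Real.exp v - Real.exp u - Real.exp u * (v - u) := by
  have h := Real.add_one_le_exp (v - u)
  have he : Real.exp u * Real.exp (v - u) = Real.exp v := by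
    rw [← Real.exp_add]; ring_nf
  nlinarith [Real.exp_pos u]

lemma exp_key_eq {u v : ℝ} (h : Real.exp v - Real.exp u - Real.exp u * (v - u) = 0) :
    u = v := by
  by_contra hne
  have h2 : v - u ≠ 0 := fun hc => hne (by linarith [sub_eq_zero.1 hc])
  have h3 := Real.add_one_lt_exp h2
  have he : Real.exp u * Real.exp (v - u) = Real.exp v := by
    rw [← Real.exp_add]; ring_nf
  nlinarith [Real.exp_pos u]

theorem scaled_polyexp_Lyapunov {n m : ℕ}
    (y : Fin m → EuclideanSpace ℝ (Fin n))
    (E : Finset (Fin m × Fin m)) (hE : ∀ e ∈ E, e.1 ≠ e.2)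
    (κ : Fin m × Fin m → ℝ) (hκ : ∀ e ∈ E, 0 < κ e)
    (S : Submodule ℝ (EuclideanSpace ℝ (Fin n)))
    (hS : S = Submodule.span ℝ {v : EuclideanSpace ℝ (Fin n) | ∃ e ∈ E, v = y e.2 - y e.1})
    (φ : EuclideanSpace ℝ (Fin n) → EuclideanSpace ℝ (Fin n))
    (hφ : ∀ ξ, φ ξ = ∑ e ∈ E, (κ e * Real.exp ⟪ξ, y e.1⟫) • (y e.2 - y e.1))
    (ξs : EuclideanSpace ℝ (Fin n))
    (hcb : ∀ i : Fin m,
      ∑ e ∈ E.filter (fun e => e.1 = i), κ e * Real.exp ⟪ξs, y i⟫ =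
      ∑ e ∈ E.filter (fun e => e.2 = i), κ e * Real.exp ⟪ξs, y e.1⟫)
    (d : Fin n → ℝ) (hd : ∀ k, 0 < d k)
    (ξ : EuclideanSpace ℝ (Fin n))
    -- v = D φ(ξ), g = ∇L(ξ) = 2 D⁻¹ (ξ - ξ*)
    (v g : EuclideanSpace ℝ (Fin n))
    (hv : ∀ k, v k = d k * φ ξ k)
    (hg : ∀ k, g k = 2 / d k * (ξ k - ξs k)) :
    ⟪v, g⟫ ≤ 0 ∧ (⟪v, g⟫ = 0 ↔ ξ - ξs ∈ Sᗮ) := by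
  set x : EuclideanSpace ℝ (Fin n) := ξ - ξs with hx
  have hξ : ξ = ξs + x := by rw [hx]; abel
  have hinner : ∀ a b : EuclideanSpace ℝ (Fin n), ⟪a, b⟫ = ∑ k, a k * b k := by
    intro a b; simp [PiLp.inner_apply, RCLike.inner_apply]; exact Finset.sum_congr rfl (fun _ _ => mul_comm _ _)
  -- abbreviations
  set a : Fin m × Fin m → ℝ := fun e => κ e * Real.exp ⟪ξs, y e.1⟫ with ha
  set u1 : Fin m × Fin m → ℝ := fun e => ⟪x, y e.1⟫ with hu1
  set u2 : Fin m × Fin m → ℝ := fun e => ⟪x, y e.2⟫ with hu2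
  have hapos : ∀ e ∈ E, 0 < a e := fun e he =>
    mul_pos (hκ e he) (Real.exp_pos _)
  -- ⟪v,g⟫ = 2 * ⟪φ ξ, x⟫
  have hvg : ⟪v, g⟫ = 2 * ⟪φ ξ, x⟫ := by
    rw [hinner, hinner, Finset.mul_sum]
    apply Finset.sum_congr rfl
    intro k _
    rw [hv, hg]
    have hxk : x k = ξ k - ξs k := rfl
    rw [hxk]
    have hdk := (hd k).ne'
    field_simp
  -- ⟪φ ξ, x⟫ as a sum
  have hphi : ⟪φ ξ, x⟫ = ∑ e ∈ E, a e * Real.exp (u1 e) * (u2 e - u1 e) := by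
    rw [hφ, sum_inner]
    apply Finset.sum_congr rfl
    intro e _
    rw [real_inner_smul_left, inner_sub_left]
    have h1 : ⟪ξ, y e.1⟫ = ⟪ξs, y e.1⟫ + u1 e := by
      rw [hξ, inner_add_left]
    rw [h1, Real.exp_add, ha, hu1, hu2]
    simp only []
    rw [real_inner_comm (y e.2) x, real_inner_comm (y e.1) x]
    ring
  -- balance
  have hA : ∀ j, ∑ e ∈ E.filter (fun e => e.2 = j), a e
      = ∑ e ∈ E.filter (fun e => e.1 = j), a e := by
    intro j
    have h1 : ∑ e ∈ E.filter (fun e => e.1 = j), a e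
        = ∑ e ∈ E.filter (fun e => e.1 = j), κ e * Real.exp ⟪ξs, y j⟫ := by
      apply Finset.sum_congr rfl
      intro e he
      obtain ⟨-, h⟩ := Finset.mem_filter.1 he
      rw [ha]; simp only []; rw [h]
    rw [h1, hcb j]
  have hbal : ∑ e ∈ E, a e * Real.exp (u2 e) = ∑ e ∈ E, a e * Real.exp (u1 e) := by
    rw [← Finset.sum_fiberwise E (fun e => e.2) (fun e => a e * Real.exp (u2 e)),
        ← Finset.sum_fiberwise E (fun e => e.1) (fun e => a e * Real.exp (u1 e))]
    apply Finset.sum_congr rfl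
    intro j _
    have h2 : ∑ e ∈ E.filter (fun e => e.2 = j), a e * Real.exp (u2 e)
        = (∑ e ∈ E.filter (fun e => e.2 = j), a e) * Real.exp ⟪x, y j⟫ := by
      rw [Finset.sum_mul]
      apply Finset.sum_congr rfl
      intro e he
      obtain ⟨-, h⟩ := Finset.mem_filter.1 he
      rw [hu2]; simp only []; rw [h]
    have h3 : ∑ e ∈ E.filter (fun e => e.1 = j), a e * Real.exp (u1 e)
        = (∑ e ∈ E.filter (fun e => e.1 = j), a e) * Real.exp ⟪x, y j⟫ := by
      rw [Finset.sum_mul]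
      apply Finset.sum_congr rfl
      intro e he
      obtain ⟨-, h⟩ := Finset.mem_filter.1 he
      rw [hu1]; simp only []; rw [h]
    rw [h2, h3, hA j]
  -- nonnegative terms
  set F : Fin m × Fin m → ℝ := fun e =>
    a e * (Real.exp (u2 e) - Real.exp (u1 e) - Real.exp (u1 e) * (u2 e - u1 e)) with hF
  have hFnn : ∀ e ∈ E, 0 ≤ F e := by
    intro e he
    exact mul_nonneg (hapos e he).le (exp_key (u1 e) (u2 e))
  have hsum : ∑ e ∈ E, F e = -⟪φ ξ, x⟫ := by
    have h4 : ∑ e ∈ E, F e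
        = (∑ e ∈ E, a e * Real.exp (u2 e)) - (∑ e ∈ E, a e * Real.exp (u1 e))
          - ∑ e ∈ E, a e * Real.exp (u1 e) * (u2 e - u1 e) := by
      rw [← Finset.sum_sub_distrib, ← Finset.sum_sub_distrib]
      apply Finset.sum_congr rfl
      intro e _
      rw [hF]; ring
    rw [h4, hbal, hphi]; ring
  have hvg2 : ⟪v, g⟫ = -2 * ∑ e ∈ E, F e := by
    rw [hvg, hsum]; ring
  have hSnn : 0 ≤ ∑ e ∈ E, F e := Finset.sum_nonneg hFnn
  constructor
  · rw [hvg2]; linarith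
  · rw [hvg2]
    constructor
    · intro h0
      have hS0 : ∑ e ∈ E, F e = 0 := by linarith
      have hall := (Finset.sum_eq_zero_iff_of_nonneg hFnn).1 hS0
      rw [Submodule.mem_orthogonal, hS]
      have hgen : ∀ w ∈ {v : EuclideanSpace ℝ (Fin n) | ∃ e ∈ E, v = y e.2 - y e.1},
          ⟪x, w⟫ = 0 := by
        rintro w ⟨e, he, rfl⟩
        have hFe := hall e he
        rw [hF] at hFe
        have hbr : Real.exp (u2 e) - Real.exp (u1 e)
            - Real.exp (u1 e) * (u2 e - u1 e) = 0 := by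
          rcases mul_eq_zero.1 hFe with h | h
          · exact absurd h (hapos e he).ne'
          · exact h
        have := exp_key_eq hbr
        rw [inner_sub_right]
        rw [hu1, hu2] at this
        simp only [] at this
        rw [← this]; ring
      intro w hw
      have hle : Submodule.span ℝ
          {v : EuclideanSpace ℝ (Fin n) | ∃ e ∈ E, v = y e.2 - y e.1} ≤ (ℝ ∙ x)ᗮ := by
        rw [Submodule.span_le]
        intro w' hw'
        rw [SetLike.mem_coe, Submodule.mem_orthogonal_singleton_iff_inner_right]
        exact hgen w' hw'
      have := hle hw
      rw [Submodule.mem_orthogonal_singleton_iff_inner_right] at this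
      rw [real_inner_comm]; exact this
    · intro hxS
      have hall : ∀ e ∈ E, F e = 0 := by
        intro e he
        have hw : (y e.2 - y e.1) ∈ S := by
          rw [hS]; exact Submodule.subset_span ⟨e, he, rfl⟩
        have h0 : ⟪y e.2 - y e.1, x⟫ = 0 :=
          (Submodule.mem_orthogonal S x).1 hxS _ hw
        rw [inner_sub_left, real_inner_comm x (y e.2), real_inner_comm x (y e.1)] at h0
        have heq : u2 e = u1 e := by
          simp only [hu1, hu2]; linarith
        simp only [hF]
        rw [heq]; ring
      rw [Finset.sum_eq_zero hall]; ring
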